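/- For each γ ∈ [0,1], a clique on a sqrt(γ)-fraction of the vertices (with remaining vertices isolated) has asymptotic S_k-density γ^{(k+1)/2}: precisely, if G_n consists of a clique on floor(sqrt(γ)·n) vertices plus isolated vertices, then the edge density of G_n tends to γ and ρ(S_k, G_n) = N(S_k, G_n)·k!/(n)_{k+1} tends to γ^{(k+1)/2}. -/

import Mathlib

open Finset

-- The number of edges of a graph on `Fin n`.
open scoped Classical in
noncomputable def ecount {n : ℕ} (G : SimpleGraph (Fin n)) : ℕ :=
  (Finset.univ.filter fun p : Fin n × Fin n => p.1 < p.2 ∧ G.Adj p.1 p.2).card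

-- The degree of a vertex.
open scoped Classical in
noncomputable def deg {n : ℕ} (G : SimpleGraph (Fin n)) (v : Fin n) : ℕ :=
  (Finset.univ.filter fun w => G.Adj v w).card

-- `N(S_k, G) = ∑_v C(d(v), k)`, the number of copies of the `k`-edge star.
noncomputable def starCount {n : ℕ} (G : SimpleGraph (Fin n)) (k : ℕ) : ℕ :=
  ∑ v : Fin n, (deg G v).choose k

-- `ρ(S_k, G) = N(S_k, G)·k!/(n)_{k+1}`, the `S_k`-density of a graph on `n` vertices.
noncomputable def starDensity {n : ℕ} (G : SimpleGraph (Fin n)) (k : ℕ) : ℝ :=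
  (starCount G k * k.factorial : ℝ) / (n.descFactorial (k + 1) : ℝ)

-- A clique on the first `⌊√γ·n⌋` vertices, with the remaining vertices isolated.
noncomputable def cliquePlusIsolated (n : ℕ) (γ : ℝ) : SimpleGraph (Fin n) :=
  SimpleGraph.fromRel fun v w =>
    v.val < ⌊Real.sqrt γ * (n : ℝ)⌋₊ ∧ w.val < ⌊Real.sqrt γ * (n : ℝ)⌋₊

open Filter

section Aux

lemma card_filter_fin (n : ℕ) (q : ℕ → Prop) [DecidablePred q] :
    ((univ : Finset (Fin n)).filter fun w => q w.val).card = ((range n).filter q).card := by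
  apply Finset.card_bij (fun w _ => w.val)
  · intro a ha; simp only [mem_filter, mem_univ, true_and] at ha
    simp [a.isLt, ha]
  · intro a _ b _ h; exact Fin.val_injective h
  · intro b hb; simp only [mem_filter, mem_range] at hb
    exact ⟨⟨b, hb.1⟩, by simp [hb.2], rfl⟩

lemma tendsto_floor_mul_div (c : ℝ) (hc : 0 ≤ c) :
    Tendsto (fun n : ℕ => (⌊c * n⌋₊ : ℝ) / n) atTop (nhds c) := by
  apply tendsto_of_tendsto_of_tendsto_of_le_of_le'
    (g := fun n : ℕ => c - 1 / n) (h := fun _ : ℕ => c)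
  · simpa using Tendsto.const_sub c tendsto_one_div_atTop_nhds_zero_nat
  · exact tendsto_const_nhds
  · filter_upwards [eventually_gt_atTop 0] with n hn
    have hn' : (0:ℝ) < n := by exact_mod_cast hn
    rw [le_div_iff₀ hn', sub_mul, div_mul_cancel₀ _ hn'.ne']
    have := Nat.sub_one_lt_floor (c * n)
    linarith
  · filter_upwards [eventually_gt_atTop 0] with n hn
    have hn' : (0:ℝ) < n := by exact_mod_cast hn
    exact div_le_iff₀ hn' |>.mpr (Nat.floor_le (by positivity))

lemma tendsto_factor (c : ℝ) (hc : 0 ≤ c) (i : ℕ) :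
    Tendsto (fun n : ℕ => ((⌊c * n⌋₊ - i : ℕ) : ℝ) / ((n - i : ℕ) : ℝ)) atTop (nhds c) := by
  rcases eq_or_lt_of_le hc with h0 | h0
  · have : (fun n : ℕ => ((⌊c * n⌋₊ - i : ℕ) : ℝ) / ((n - i : ℕ) : ℝ)) = fun n : ℕ => 0 := by
      funext n; simp [← h0]
    rw [this, ← h0]; exact tendsto_const_nhds
  · have hm : Tendsto (fun n : ℕ => ⌊c * n⌋₊) atTop atTop := by
      apply tendsto_nat_floor_atTop.comp
      exact Tendsto.const_mul_atTop h0 tendsto_natCast_atTop_atTop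
    have key : Tendsto (fun n : ℕ => ((⌊c * n⌋₊ : ℝ) / n - i / n) / (1 - i / n)) atTop (nhds c) := by
      have h1 : Tendsto (fun n : ℕ => (⌊c * n⌋₊ : ℝ) / n - i / n) atTop (nhds (c - 0)) :=
        (tendsto_floor_mul_div c hc).sub
          (by simpa [div_eq_mul_inv] using tendsto_one_div_atTop_nhds_zero_nat.const_mul (i:ℝ))
      have h2 : Tendsto (fun n : ℕ => 1 - (i:ℝ) / n) atTop (nhds (1 - 0)) :=
        tendsto_const_nhds.sub
          (by simpa [div_eq_mul_inv] using tendsto_one_div_atTop_nhds_zero_nat.const_mul (i:ℝ))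
      simpa [Pi.div_def] using h1.div h2 (by norm_num)
    apply key.congr'
    filter_upwards [eventually_ge_atTop (i+1), hm.eventually_ge_atTop i] with n hn hmn
    have hni : (i:ℝ) < n := by exact_mod_cast hn
    have hn0 : (0:ℝ) < n := lt_of_le_of_lt (Nat.cast_nonneg i) hni
    rw [Nat.cast_sub hmn, Nat.cast_sub (by omega)]
    field_simp

lemma tendsto_ratio (c : ℝ) (hc : 0 ≤ c) (j : ℕ) :
    Tendsto (fun n : ℕ => ((⌊c * n⌋₊.descFactorial j : ℕ) : ℝ) / ((n.descFactorial j : ℕ) : ℝ))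
      atTop (nhds (c ^ j)) := by
  have heq : ∀ n : ℕ, ((⌊c * n⌋₊.descFactorial j : ℕ) : ℝ) / ((n.descFactorial j : ℕ) : ℝ)
      = ∏ i ∈ range j, ((⌊c * n⌋₊ - i : ℕ) : ℝ) / ((n - i : ℕ) : ℝ) := by
    intro n
    rw [Finset.prod_div_distrib, Nat.descFactorial_eq_prod_range, Nat.descFactorial_eq_prod_range]
    push_cast
    rfl
  simp only [heq]
  have := tendsto_finset_prod (range j) (fun i _ => tendsto_factor c hc i)
  simpa using this

lemma adj_iff {n : ℕ} {γ : ℝ} {v w : Fin n} :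
    (cliquePlusIsolated n γ).Adj v w ↔
      v ≠ w ∧ v.val < ⌊Real.sqrt γ * (n : ℝ)⌋₊ ∧ w.val < ⌊Real.sqrt γ * (n : ℝ)⌋₊ := by
  simp only [cliquePlusIsolated, SimpleGraph.fromRel_adj]
  tauto

lemma deg_eq {n : ℕ} {γ : ℝ} (hmn : ⌊Real.sqrt γ * (n : ℝ)⌋₊ ≤ n) (v : Fin n) :
    deg (cliquePlusIsolated n γ) v =
      if v.val < ⌊Real.sqrt γ * (n : ℝ)⌋₊ then ⌊Real.sqrt γ * (n : ℝ)⌋₊ - 1 else 0 := by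
  classical
  set m := ⌊Real.sqrt γ * (n : ℝ)⌋₊ with hm
  rw [deg]
  by_cases hv : v.val < m
  · rw [if_pos hv]
    have he : (Finset.univ.filter fun w => (cliquePlusIsolated n γ).Adj v w)
        = (univ.filter fun w : Fin n => w.val < m).erase v := by
      ext w
      simp only [mem_filter, mem_univ, true_and, mem_erase, adj_iff, ← hm]
      constructor
      · rintro ⟨h1, _, h3⟩; exact ⟨fun h => h1 h.symm, h3⟩
      · rintro ⟨h1, h2⟩; exact ⟨fun h => h1 h.symm, hv, h2⟩
    rw [he, Finset.card_erase_of_mem (by simpa using hv), card_filter_fin n (fun x => x < m)]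
    have : (range n).filter (fun x => x < m) = range m := by
      ext x; simp only [mem_filter, mem_range]; omega
    rw [this, Finset.card_range]
  · rw [if_neg hv]
    convert Finset.card_empty
    ext w
    simp only [mem_filter, mem_univ, true_and, adj_iff, ← hm, Finset.notMem_empty, iff_false]
    rintro ⟨_, h2, _⟩; exact hv h2

lemma starCount_eq {n : ℕ} {γ : ℝ} (hmn : ⌊Real.sqrt γ * (n : ℝ)⌋₊ ≤ n) (k : ℕ) (hk : 0 < k) :
    starCount (cliquePlusIsolated n γ) k
      = ⌊Real.sqrt γ * (n : ℝ)⌋₊ * ((⌊Real.sqrt γ * (n : ℝ)⌋₊ - 1).choose k) := by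
  classical
  set m := ⌊Real.sqrt γ * (n : ℝ)⌋₊ with hm
  rw [starCount]
  have : ∀ v : Fin n, (deg (cliquePlusIsolated n γ) v).choose k
      = if v.val < m then (m-1).choose k else 0 := by
    intro v
    rw [deg_eq hmn v, ← hm]
    split
    · rfl
    · exact Nat.choose_eq_zero_of_lt hk
  simp only [this]
  rw [Finset.sum_ite, Finset.sum_const, Finset.sum_const_zero, add_zero, smul_eq_mul,
    card_filter_fin n (fun x => x < m)]
  congr 1
  have : (range n).filter (fun x => x < m) = range m := by
    ext x; simp only [mem_filter, mem_range]; omega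
  rw [this, Finset.card_range]

lemma ecount_eq {n : ℕ} {γ : ℝ} (hmn : ⌊Real.sqrt γ * (n : ℝ)⌋₊ ≤ n) :
    ecount (cliquePlusIsolated n γ) = (⌊Real.sqrt γ * (n : ℝ)⌋₊).choose 2 := by
  classical
  set m := ⌊Real.sqrt γ * (n : ℝ)⌋₊ with hm
  rw [ecount]
  rw [Finset.card_filter]
  rw [Fintype.sum_prod_type]
  have step : ∀ a : Fin n, (∑ b : Fin n,
      if a < b ∧ (cliquePlusIsolated n γ).Adj a b then 1 else 0) =
      if a.val < m then m - (a.val + 1) else 0 := by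
    intro a
    rw [← Finset.card_filter]
    have he : (Finset.univ.filter fun b : Fin n => a < b ∧ (cliquePlusIsolated n γ).Adj a b)
        = (Finset.univ.filter fun b : Fin n => a.val < b.val ∧ a.val < m ∧ b.val < m) := by
      ext b
      simp only [mem_filter, mem_univ, true_and, adj_iff, ← hm, Fin.lt_def]
      constructor
      · rintro ⟨h1, _, h3, h4⟩; exact ⟨h1, h3, h4⟩
      · rintro ⟨h1, h3, h4⟩; exact ⟨h1, by intro h; rw [h] at h1; omega, h3, h4⟩
    rw [he, card_filter_fin n (fun x => a.val < x ∧ a.val < m ∧ x < m)]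
    by_cases ha : a.val < m
    · rw [if_pos ha]
      have : (range n).filter (fun x => a.val < x ∧ a.val < m ∧ x < m) = Ico (a.val + 1) m := by
        ext x; simp only [mem_filter, mem_range, mem_Ico]; omega
      rw [this, Nat.card_Ico]
    · rw [if_neg ha]
      convert Finset.card_empty
      ext x; simp only [mem_filter, mem_range, Finset.notMem_empty, iff_false]; omega
  simp only [step]
  rw [Fin.sum_univ_eq_sum_range (fun i => if i < m then m - (i + 1) else 0) n]
  rw [← Finset.sum_filter]
  have : (range n).filter (fun x => x < m) = range m := by
    ext x; simp only [mem_filter, mem_range]; omega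
  rw [this]
  have h1 : ∑ i ∈ range m, (m - (i + 1)) = ∑ i ∈ range m, i := by
    rw [← Finset.sum_range_reflect]
    apply Finset.sum_congr rfl
    intro i hi; simp only [mem_range] at hi; omega
  rw [h1]
  have h2 := Finset.sum_range_id_mul_two m
  have h3 : m.choose 2 = m * (m - 1) / 2 := Nat.choose_two_right m
  omega

lemma mul_descFactorial_pred (m k : ℕ) :
    m * (m - 1).descFactorial k = m.descFactorial (k + 1) := by
  cases m with
  | zero => simp
  | succ m' => rw [Nat.succ_sub_one, Nat.succ_descFactorial_succ]

end Aux

/-- A clique on a `√γ`-fraction of the vertices plus isolated vertices has edge density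
tending to `γ` and `S_k`-density tending to `γ^{(k+1)/2}`. -/
theorem clique_starDensity (γ : ℝ) (hγ : γ ∈ Set.Icc (0:ℝ) 1) (k : ℕ) (hk : 0 < k) :
    Filter.Tendsto (fun n : ℕ => (ecount (cliquePlusIsolated n γ) : ℝ) / (n.choose 2 : ℝ))
      Filter.atTop (nhds γ) ∧
    Filter.Tendsto (fun n : ℕ => starDensity (cliquePlusIsolated n γ) k)
      Filter.atTop (nhds (γ ^ (((k : ℝ) + 1) / 2))) := by
  obtain ⟨hγ0, hγ1⟩ := hγ
  set c := Real.sqrt γ with hc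
  have hc0 : 0 ≤ c := Real.sqrt_nonneg γ
  have hc1 : c ≤ 1 := Real.sqrt_le_one.mpr hγ1
  have hmn : ∀ n : ℕ, ⌊c * (n : ℝ)⌋₊ ≤ n := by
    intro n
    calc ⌊c * (n : ℝ)⌋₊ ≤ ⌊(n : ℝ)⌋₊ :=
          Nat.floor_le_floor (by nlinarith [Nat.cast_nonneg (α := ℝ) n])
      _ = n := Nat.floor_natCast n
  have hdf : ∀ l : ℕ, (l.descFactorial 2 : ℝ) = 2 * (l.choose 2 : ℝ) := by
    intro l
    rw [Nat.descFactorial_eq_factorial_mul_choose]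
    push_cast [Nat.factorial]
    ring
  constructor
  · have key := tendsto_ratio c hc0 2
    have hcc : c ^ 2 = γ := Real.sq_sqrt hγ0
    rw [hcc] at key
    apply key.congr
    intro n
    rw [ecount_eq (hmn n), hdf, hdf, mul_div_mul_left _ _ (two_ne_zero)]
  · have key := tendsto_ratio c hc0 (k + 1)
    have hcc : c ^ (k + 1) = γ ^ (((k : ℝ) + 1) / 2) := by
      rw [hc, Real.sqrt_eq_rpow, ← Real.rpow_natCast (γ ^ ((1:ℝ)/2)) (k + 1),
        ← Real.rpow_mul hγ0]
      congr 1
      push_cast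
      ring
    rw [hcc] at key
    apply key.congr
    intro n
    rw [starDensity]
    congr 1
    rw [← Nat.cast_mul, starCount_eq (hmn n) k hk, mul_assoc,
      mul_comm ((⌊c * (n:ℝ)⌋₊ - 1).choose k) k.factorial,
      ← Nat.descFactorial_eq_factorial_mul_choose, mul_descFactorial_pred]
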